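/- Let (R, m) be a commutative Noetherian local ring and let I be an ideal of positive grade with a minimal generating set x_1, …, x_n in which each x_i is a nonzerodivisor on R. Then tr_R(I) = Σ_{i=1}^n (x_i : I). -/
import Mathlib


/-- The trace ideal of an `R`-module `M`: the ideal of `R` generated by all values `f(m)`
for `f ∈ Hom_R(M, R)` and `m ∈ M`. -/
def traceIdeal (R : Type*) (M : Type*) [CommRing R] [AddCommGroup M] [Module R M] : Ideal R :=
  Ideal.span {r : R | ∃ (f : M →ₗ[R] R) (m : M), f m = r}

/-- Let `(R, m)` be a commutative Noetherian local ring and let `I` be an ideal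
of positive grade with a minimal generating set `x_1, …, x_n` consisting of nonzerodivisors.
Then `tr_R(I) = Σ_{i=1}^n (x_i : I)`.  Minimality of the generating set is expressed as:
the `x_i` generate `I` and no generating family of `I` has fewer elements. -/
theorem traceIdeal_eq_sum_colon {R : Type*} [CommRing R] [IsNoetherianRing R] [IsLocalRing R]
    (I : Ideal R) {n : ℕ} (x : Fin n → R)
    (hgen : Ideal.span (Set.range x) = I)
    (hmin : ∀ (m : ℕ) (y : Fin m → R), Ideal.span (Set.range y) = I → n ≤ m)
    (hnzd : ∀ i, x i ∈ nonZeroDivisors R)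
    (hgrade : ∃ r ∈ I, r ∈ nonZeroDivisors R) :
    traceIdeal R ↥I = ∑ i, (Ideal.span {x i}).colon I := by
  have hxI : ∀ i, x i ∈ I := fun i => by
    rw [← hgen]; exact Ideal.subset_span ⟨i, rfl⟩
  apply le_antisymm
  · rw [traceIdeal, Ideal.span_le]
    rintro r ⟨f, a, rfl⟩
    have ha : (a : R) ∈ Ideal.span (Set.range x) := by rw [hgen]; exact a.2
    obtain ⟨c, hc⟩ := (Submodule.mem_span_range_iff_exists_fun R).mp ha
    have ha' : a = ∑ i, c i • (⟨x i, hxI i⟩ : I) := by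
      apply Subtype.ext
      push_cast
      exact hc.symm
    rw [ha', map_sum, SetLike.mem_coe]
    refine Submodule.sum_mem _ fun i _ => ?_
    have hmem : f ⟨x i, hxI i⟩ ∈ (Ideal.span {x i}).colon I := by
      rw [Submodule.mem_colon]
      intro p hp
      have : (x i) • (⟨p, hp⟩ : I) = p • (⟨x i, hxI i⟩ : I) := by
        apply Subtype.ext; simp [mul_comm]
      rw [Ideal.mem_span_singleton, smul_eq_mul]
      refine ⟨f ⟨p, hp⟩, ?_⟩
      calc f ⟨x i, hxI i⟩ * p = p • f ⟨x i, hxI i⟩ := by rw [smul_eq_mul, mul_comm]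
        _ = f (p • ⟨x i, hxI i⟩) := (map_smul f p _).symm
        _ = f ((x i) • ⟨p, hp⟩) := by rw [this]
        _ = x i * f ⟨p, hp⟩ := by rw [map_smul, smul_eq_mul]
    have hle : (Ideal.span {x i}).colon I ≤ ∑ j, (Ideal.span {x j}).colon I := by
      exact Finset.single_le_sum (f := fun j => (Ideal.span {x j}).colon I)
        (fun j _ => bot_le) (Finset.mem_univ i)
    rw [map_smul]
    exact hle (Ideal.mul_mem_left _ _ hmem)
  · refine Finset.sum_induction _ (· ≤ traceIdeal R ↥I)
      (fun a b ha hb => by rw [Submodule.add_eq_sup]; exact sup_le ha hb) bot_le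
      (fun i _ => ?_)
    intro r hr
    rw [Submodule.mem_colon] at hr
    have hex : ∀ a : I, ∃ t, t * x i = r * (a : R) := fun a => by
      have := hr (a : R) a.2
      rwa [smul_eq_mul, Ideal.mem_span_singleton'] at this
    choose t ht using hex
    have hcancel : ∀ a b : R, a * x i = b * x i → a = b := fun a b h =>
      (mul_cancel_right_mem_nonZeroDivisors (hnzd i)).mp h
    set f : I →ₗ[R] R :=
      { toFun := t
        map_add' := fun a b => hcancel _ _ (by
          rw [ht, add_mul, ht, ht]; push_cast; ring)
        map_smul' := fun c a => hcancel _ _ (by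
          rw [ht, smul_eq_mul, RingHom.id_apply, mul_assoc, ht]
          push_cast [smul_eq_mul]; ring) } with hf
    refine Ideal.subset_span ⟨f, ⟨x i, hxI i⟩, ?_⟩
    apply hcancel
    rw [hf]
    exact ht ⟨x i, hxI i⟩
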